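/- arXiv:1611.01470 — 4 statements merged into one kernel-verified Lean document; each statement's English description precedes it below -/
import Mathlib

section
/- Lemma (characterization of N(δ)): in a unital ring A with a chain of idempotents 0 = p₀ < p₁ < ... < pₙ < p_{n+1} = 1, an element g ∈ Δ(δ)ˣ (invertible element with (1-pⱼ)gpⱼ = 0 for j = 1,...,n) satisfies Φ_δ(g) = 1 if and only if (1-p_{j-1}) g pⱼ = (1-p_{j-1}) pⱼ for all j = 1,...,n+1. -/
/-- The diagonal truncation associated with a chain of idempotents. -/
def Phi {A : Type*} [Ring A] (n : ℕ) (p : ℕ → A) (x : A) : A :=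
  ∑ j ∈ Finset.Icc 1 (n + 1), (p j - p (j - 1)) * x * (p j - p (j - 1))

/-- Characterization of `N(δ)`: an element `g ∈ Δ(δ)ˣ` satisfies `Φ_δ(g) = 1` iff
`(1 - p (j-1)) g (p j) = (1 - p (j-1)) (p j)` for all `j = 1, ..., n+1`. -/
theorem stmt7 {A : Type*} [Ring A] (n : ℕ) (p : ℕ → A)
    (h0 : p 0 = 0) (h1 : p (n + 1) = 1)
    (hp : ∀ j ∈ Finset.Icc 0 (n + 1), ∀ k ∈ Finset.Icc 0 (n + 1),
      p j * p k = p (min j k))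
    (u : Aˣ)
    (hu : ∀ j ∈ Finset.Icc 1 n, (1 - p j) * (u : A) * p j = 0)
    (hu' : ∀ j ∈ Finset.Icc 1 n, (1 - p j) * ((u⁻¹ : Aˣ) : A) * p j = 0) :
    Phi n p (u : A) = 1 ↔
      ∀ j ∈ Finset.Icc 1 (n + 1),
        (1 - p (j - 1)) * (u : A) * p j = (1 - p (j - 1)) * p j := by
  set g : A := (u : A) with hg
  set q : ℕ → A := fun j => p j - p (j - 1) with hqdef
  have hpp : ∀ j k, j ≤ n + 1 → k ≤ n + 1 → p j * p k = p (min j k) := by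
    intro j k hj hk
    exact hp j (by simp [Finset.mem_Icc, hj]) k (by simp [Finset.mem_Icc, hk])
  -- orthogonality / idempotency of the q's
  have hqq : ∀ j k, 1 ≤ j → j ≤ n + 1 → 1 ≤ k → k ≤ n + 1 →
      q j * q k = if j = k then q j else 0 := by
    intro j k hj1 hj2 hk1 hk2
    have e1 : p j * p k = p (min j k) := hpp _ _ hj2 hk2
    have e2 : p j * p (k - 1) = p (min j (k - 1)) := hpp _ _ hj2 (by omega)
    have e3 : p (j - 1) * p k = p (min (j - 1) k) := hpp _ _ (by omega) hk2
    have e4 : p (j - 1) * p (k - 1) = p (min (j - 1) (k - 1)) := hpp _ _ (by omega) (by omega)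
    simp only [hqdef, sub_mul, mul_sub, e1, e2, e3, e4]
    rcases lt_trichotomy j k with h | h | h
    · rw [if_neg (by omega), show min j k = j from by omega,
        show min j (k - 1) = j from by omega, show min (j - 1) k = j - 1 from by omega,
        show min (j - 1) (k - 1) = j - 1 from by omega]
      abel
    · subst h
      rw [if_pos rfl, show min j j = j from by omega,
        show min j (j - 1) = j - 1 from by omega, show min (j - 1) j = j - 1 from by omega,
        show min (j - 1) (j - 1) = j - 1 from by omega]
      abel
    · rw [if_neg (by omega), show min j k = k from by omega,
        show min j (k - 1) = k - 1 from by omega, show min (j - 1) k = k from by omega,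
        show min (j - 1) (k - 1) = k - 1 from by omega]
      abel
  -- triangularity for all j ≤ n+1
  have hu2 : ∀ j, j ≤ n + 1 → (1 - p j) * g * p j = 0 := by
    intro j hj
    rcases Nat.eq_zero_or_pos j with h | h
    · subst h; simp [h0]
    · rcases Nat.lt_or_ge j (n + 1) with h' | h'
      · exact hu j (by simp [Finset.mem_Icc]; omega)
      · have : j = n + 1 := by omega
        subst this; simp [h1]
  -- g p_j = p_j g p_j
  have habs : ∀ j, j ≤ n + 1 → g * p j = p j * (g * p j) := by
    intro j hj
    have := hu2 j hj
    rw [sub_mul, one_mul, sub_mul, sub_eq_zero] at this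
    conv_lhs => rw [this]
    rw [mul_assoc]
  -- key: (1 - p (j-1)) * g * p j = q j * g * q j
  have hkey : ∀ j, 1 ≤ j → j ≤ n + 1 → (1 - p (j - 1)) * g * p j = q j * g * q j := by
    intro j hj1 hj2
    have e0 : (1 - p (j - 1)) * p j = q j := by
      rw [sub_mul, one_mul, hpp (j - 1) j (by omega) hj2, show min (j - 1) j = j - 1 from by omega]
    have e5 : q j * p (j - 1) = 0 := by
      simp only [hqdef, sub_mul, hpp j (j - 1) hj2 (by omega),
        hpp (j - 1) (j - 1) (by omega) (by omega),
        show min j (j - 1) = j - 1 from by omega, show min (j - 1) (j - 1) = j - 1 from by omega,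
        sub_self]
    calc (1 - p (j - 1)) * g * p j
        = (1 - p (j - 1)) * (p j * (g * p j)) := by rw [mul_assoc, ← habs j hj2]
      _ = q j * (g * p j) := by rw [← mul_assoc, e0]
      _ = q j * (g * (p (j - 1) + q j)) := by simp [hqdef]
      _ = q j * (g * p (j - 1)) + q j * (g * q j) := by rw [mul_add, mul_add]
      _ = q j * (p (j - 1) * (g * p (j - 1))) + q j * (g * q j) := by
          rw [← habs (j - 1) (by omega)]
      _ = q j * g * q j := by rw [← mul_assoc (q j), e5, zero_mul, zero_add, mul_assoc]
  have e0' : ∀ j, 1 ≤ j → j ≤ n + 1 → (1 - p (j - 1)) * p j = q j := by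
    intro j hj1 hj2
    rw [sub_mul, one_mul, hpp (j - 1) j (by omega) hj2, show min (j - 1) j = j - 1 from by omega]
  have hPhi : Phi n p g = ∑ j ∈ Finset.Icc 1 (n + 1), q j * g * q j := rfl
  have hsum : ∑ j ∈ Finset.Icc 1 (n + 1), q j = 1 := by
    rw [← Finset.Ico_add_one_right_eq_Icc, Finset.sum_Ico_eq_sum_range]
    have hqi : ∀ i, q (1 + i) = p (i + 1) - p i := by
      intro i
      simp only [hqdef]
      congr 2 <;> omega
    rw [show n + 1 + 1 - 1 = n + 1 from rfl]
    simp only [hqi]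
    rw [Finset.sum_range_sub p, h1, h0, sub_zero]
  constructor
  · -- forward
    intro hΦ j hj
    simp only [Finset.mem_Icc] at hj
    rw [hkey j hj.1 hj.2, e0' j hj.1 hj.2]
    have h1' : q j * Phi n p g * q j = q j := by
      rw [hΦ, mul_one, hqq j j hj.1 hj.2 hj.1 hj.2, if_pos rfl]
    have idem : q j * q j = q j := by rw [hqq j j hj.1 hj.2 hj.1 hj.2, if_pos rfl]
    rw [hPhi, Finset.mul_sum, Finset.sum_mul] at h1'
    have hs : (∑ i ∈ Finset.Icc 1 (n + 1), q j * (q i * g * q i) * q j)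
        = q j * (q j * g * q j) * q j := by
      apply Finset.sum_eq_single
      · intro k hk hkj
        simp only [Finset.mem_Icc] at hk
        simp only [← mul_assoc]
        rw [hqq j k hj.1 hj.2 hk.1 hk.2, if_neg (fun h => hkj h.symm), zero_mul, zero_mul,
          zero_mul]
      · intro h
        exact absurd (Finset.mem_Icc.mpr hj) h
    rw [hs] at h1'
    conv_rhs => rw [← h1']
    simp only [← mul_assoc]
    rw [idem, mul_assoc (q j * g), idem]
  · -- backward
    intro H
    rw [hPhi, ← hsum]
    apply Finset.sum_congr rfl
    intro j hj
    have hj' := Finset.mem_Icc.mp hj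
    have := H j hj
    rw [hkey j hj'.1 hj'.2, e0' j hj'.1 hj'.2] at this
    exact this
end

section
/- Lemma (kernel decomposition): in a unital ring with a chain of idempotents 0 = p₀ < p₁ < ... < pₙ < p_{n+1} = 1, every x with Φ_δ(x) = 0 decomposes uniquely as x = y + z, where y = Σ_{j=2}^{n+1} (1-p_{j-1}) pⱼ x p_{j-1} satisfies pⱼ y (1-p_{j-1}) = 0 for all j = 1,...,n+1, and z = Σ_{j=2}^{n+1} p_{j-1} x pⱼ (1-p_{j-1}) satisfies (1-p_{j-1}) z pⱼ = 0 for all j = 1,...,n+1. -/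
private lemma termkey {A : Type*} [Ring A] (a b x : A) (hab : a*b = a) (hba : b*a = a) :
    (1-a)*b*x*a + a*x*b*(1-a) + (b-a)*x*(b-a) = b*x*b - a*x*a := by
  have h1 : ∀ t : A, a*(b*t) = a*t := fun t => by rw [← mul_assoc, hab]
  have h2 : ∀ t : A, b*(a*t) = a*t := fun t => by rw [← mul_assoc, hba]
  simp only [sub_mul, mul_sub, one_mul, mul_one, mul_assoc, hab, hba, h1, h2]
  abel

/-- Kernel decomposition: every `x ∈ ker Φ_δ` decomposes uniquely as `x = y + z` with
`y ∈ TN(δ̂)` and `z ∈ TN(δ)`, with the explicit formulas for `y` and `z`. -/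
theorem stmt9 {A : Type*} [Ring A] (n : ℕ) (p : ℕ → A)
    (h0 : p 0 = 0) (h1 : p (n + 1) = 1)
    (hp : ∀ j ∈ Finset.Icc 0 (n + 1), ∀ k ∈ Finset.Icc 0 (n + 1),
      p j * p k = p (min j k))
    (x : A) (hx : Phi n p x = 0) :
    (x = (∑ j ∈ Finset.Icc 2 (n + 1), (1 - p (j - 1)) * p j * x * p (j - 1))
       + (∑ j ∈ Finset.Icc 2 (n + 1), p (j - 1) * x * p j * (1 - p (j - 1)))) ∧
    (∀ j ∈ Finset.Icc 1 (n + 1),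
      p j * (∑ i ∈ Finset.Icc 2 (n + 1), (1 - p (i - 1)) * p i * x * p (i - 1))
        * (1 - p (j - 1)) = 0) ∧
    (∀ j ∈ Finset.Icc 1 (n + 1),
      (1 - p (j - 1)) * (∑ i ∈ Finset.Icc 2 (n + 1), p (i - 1) * x * p i * (1 - p (i - 1)))
        * p j = 0) ∧
    (∀ y z : A,
      (∀ j ∈ Finset.Icc 1 (n + 1), p j * y * (1 - p (j - 1)) = 0) →
      (∀ j ∈ Finset.Icc 1 (n + 1), (1 - p (j - 1)) * z * p j = 0) →
      x = y + z →
      y = (∑ j ∈ Finset.Icc 2 (n + 1), (1 - p (j - 1)) * p j * x * p (j - 1)) ∧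
      z = (∑ j ∈ Finset.Icc 2 (n + 1), p (j - 1) * x * p j * (1 - p (j - 1)))) := by
  have pm : ∀ j k, j ≤ n+1 → k ≤ n+1 → p j * p k = p (min j k) := fun j k hj hk =>
    hp j (Finset.mem_Icc.mpr ⟨Nat.zero_le _, hj⟩) k (Finset.mem_Icc.mpr ⟨Nat.zero_le _, hk⟩)
  -- vanishing product helpers
  have pz : ∀ j k, j ≤ n+1 → k ≤ n+1 → j ≤ k → p j * (1 - p k) = 0 := by
    intro j k hj hk hjk
    rw [mul_sub, mul_one, pm j k hj hk, min_eq_left hjk, sub_self]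
  have zp : ∀ j k, j ≤ n+1 → k ≤ n+1 → k ≤ j → (1 - p j) * p k = 0 := by
    intro j k hj hk hkj
    rw [sub_mul, one_mul, pm j k hj hk, min_eq_right hkj, sub_self]
  -- Part 1 : x = Y + Z
  have hsub : Finset.Icc 2 (n+1) ⊆ Finset.Icc 1 (n+1) := by
    intro j hj; simp only [Finset.mem_Icc] at *; omega
  have hY1 : (∑ j ∈ Finset.Icc 2 (n + 1), (1 - p (j - 1)) * p j * x * p (j - 1))
      = ∑ j ∈ Finset.Icc 1 (n + 1), (1 - p (j - 1)) * p j * x * p (j - 1) := by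
    refine Finset.sum_subset hsub ?_
    intro j hj hj2
    have : j = 1 := by simp only [Finset.mem_Icc] at *; omega
    subst this; simp [h0]
  have hZ1 : (∑ j ∈ Finset.Icc 2 (n + 1), p (j - 1) * x * p j * (1 - p (j - 1)))
      = ∑ j ∈ Finset.Icc 1 (n + 1), p (j - 1) * x * p j * (1 - p (j - 1)) := by
    refine Finset.sum_subset hsub ?_
    intro j hj hj2
    have : j = 1 := by simp only [Finset.mem_Icc] at *; omega
    subst this; simp [h0]
  have hmain : x = (∑ j ∈ Finset.Icc 2 (n + 1), (1 - p (j - 1)) * p j * x * p (j - 1))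
       + (∑ j ∈ Finset.Icc 2 (n + 1), p (j - 1) * x * p j * (1 - p (j - 1))) := by
    have hsum : ∑ j ∈ Finset.Icc 1 (n+1),
        ((1 - p (j - 1)) * p j * x * p (j - 1) + p (j - 1) * x * p j * (1 - p (j - 1))
          + (p j - p (j - 1)) * x * (p j - p (j - 1))) = x := by
      have hcong : ∀ j ∈ Finset.Icc 1 (n+1),
          (1 - p (j - 1)) * p j * x * p (j - 1) + p (j - 1) * x * p j * (1 - p (j - 1))
            + (p j - p (j - 1)) * x * (p j - p (j - 1))
          = p j * x * p j - p (j-1) * x * p (j-1) := by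
        intro j hj
        simp only [Finset.mem_Icc] at hj
        exact termkey (p (j-1)) (p j) x
          (by rw [pm (j-1) j (by omega) (by omega)]; congr 1; omega)
          (by rw [pm j (j-1) (by omega) (by omega)]; congr 1; omega)
      rw [Finset.sum_congr rfl hcong, ← Finset.Ico_add_one_right_eq_Icc, Finset.sum_Ico_eq_sum_range,
        show n+1+1-1 = n+1 from by omega]
      calc ∑ i ∈ Finset.range (n+1), (p (1+i) * x * p (1+i) - p (1+i-1) * x * p (1+i-1))
          = ∑ i ∈ Finset.range (n+1), (p (i+1) * x * p (i+1) - p i * x * p i) := by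
            refine Finset.sum_congr rfl fun i _ => ?_
            rw [show 1+i = i+1 from by omega, show i+1-1 = i from by omega]
        _ = p (n+1) * x * p (n+1) - p 0 * x * p 0 :=
            Finset.sum_range_sub (fun i => p i * x * p i) (n+1)
        _ = x := by rw [h0, h1]; simp
    have hphi : ∑ j ∈ Finset.Icc 1 (n+1), (p j - p (j - 1)) * x * (p j - p (j - 1)) = 0 := hx
    rw [hY1, hZ1]
    calc x = ∑ j ∈ Finset.Icc 1 (n+1),
        ((1 - p (j - 1)) * p j * x * p (j - 1) + p (j - 1) * x * p j * (1 - p (j - 1))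
          + (p j - p (j - 1)) * x * (p j - p (j - 1))) := hsum.symm
      _ = (∑ j ∈ Finset.Icc 1 (n + 1), (1 - p (j - 1)) * p j * x * p (j - 1))
       + (∑ j ∈ Finset.Icc 1 (n + 1), p (j - 1) * x * p j * (1 - p (j - 1)))
       + (∑ j ∈ Finset.Icc 1 (n+1), (p j - p (j - 1)) * x * (p j - p (j - 1))) := by
          rw [← Finset.sum_add_distrib, ← Finset.sum_add_distrib]
      _ = _ := by rw [hphi, add_zero]
  refine ⟨hmain, ?_, ?_, ?_⟩
  · -- p j * Y * (1 - p (j-1)) = 0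
    intro j hj
    simp only [Finset.mem_Icc] at hj
    rw [Finset.mul_sum, Finset.sum_mul]
    refine Finset.sum_eq_zero ?_
    intro i hi
    simp only [Finset.mem_Icc] at hi
    rcases le_or_gt i j with hij | hij
    · -- p (i-1) * (1 - p (j-1)) = 0
      have h := pz (i-1) (j-1) (by omega) (by omega) (by omega)
      simp only [mul_assoc]
      rw [h]; simp
    · -- p j * (1 - p (i-1)) = 0
      have h := pz j (i-1) (by omega) (by omega) (by omega)
      simp only [← mul_assoc]
      rw [h]; simp
  · -- (1 - p (j-1)) * Z * p j = 0
    intro j hj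
    simp only [Finset.mem_Icc] at hj
    rw [Finset.mul_sum, Finset.sum_mul]
    refine Finset.sum_eq_zero ?_
    intro i hi
    simp only [Finset.mem_Icc] at hi
    rcases le_or_gt i j with hij | hij
    · -- (1 - p (j-1)) * p (i-1) = 0
      have h := zp (j-1) (i-1) (by omega) (by omega) (by omega)
      simp only [← mul_assoc]
      rw [h]; simp
    · -- (1 - p (i-1)) * p j = 0
      have h := zp (i-1) j (by omega) (by omega) (by omega)
      simp only [mul_assoc]
      rw [h]; simp
  · -- uniqueness
    intro y z hy hz hxyz
    have hy1 : p 1 * y = 0 := by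
      have := hy 1 (by simp)
      simpa [h0] using this
    have hyY : y = ∑ j ∈ Finset.Icc 2 (n + 1), (1 - p (j - 1)) * p j * x * p (j - 1) := by
      have hterm : ∀ j ∈ Finset.Icc 2 (n+1),
          (1 - p (j - 1)) * p j * x * p (j - 1) = p j * y - p (j-1) * y := by
        intro j hj
        simp only [Finset.mem_Icc] at hj
        have hzpart : (1 - p (j - 1)) * p j * z * p (j - 1) = 0 := by
          have hz' := hz (j-1) (Finset.mem_Icc.mpr ⟨by omega, by omega⟩)
          rw [sub_mul, one_mul, sub_mul] at hz'
          have hz'' : z * p (j-1) = p (j-1-1) * (z * p (j-1)) := by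
            rw [← mul_assoc]; exact sub_eq_zero.mp hz'
          have e1 : p j * p (j-1-1) = p (j-1-1) := by
            rw [pm j (j-1-1) (by omega) (by omega)]; congr 1; omega
          have e2 : (1 - p (j-1)) * p (j-1-1) = 0 := zp (j-1) (j-1-1) (by omega) (by omega) (by omega)
          calc (1 - p (j-1)) * p j * z * p (j-1)
              = (1 - p (j-1)) * (p j * (z * p (j-1))) := by simp only [mul_assoc]
            _ = (1 - p (j-1)) * (p j * (p (j-1-1) * (z * p (j-1)))) := by rw [← hz'']
            _ = ((1 - p (j-1)) * p (j-1-1)) * (z * p (j-1)) := by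
                rw [← mul_assoc (p j), e1]; simp only [mul_assoc]
            _ = 0 := by rw [e2, zero_mul]
        have hypart : (1 - p (j - 1)) * p j * y * p (j - 1) = p j * y - p (j-1) * y := by
          have hy' := hy j (Finset.mem_Icc.mpr ⟨by omega, by omega⟩)
          rw [mul_sub, mul_one] at hy'
          have h1' : p j * y = p j * y * p (j - 1) := sub_eq_zero.mp hy'
          have ea : p (j-1) * p j = p (j-1) := by
            rw [pm (j-1) j (by omega) (by omega)]; congr 1; omega
          calc (1 - p (j-1)) * p j * y * p (j-1)
              = (1 - p (j-1)) * (p j * y * p (j-1)) := by simp only [mul_assoc]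
            _ = (1 - p (j-1)) * (p j * y) := by rw [← h1']
            _ = p j * y - p (j-1) * (p j * y) := by rw [sub_mul, one_mul]
            _ = p j * y - p (j-1) * y := by rw [← mul_assoc, ea]
        calc (1 - p (j - 1)) * p j * x * p (j - 1)
            = (1 - p (j - 1)) * p j * y * p (j - 1) + (1 - p (j - 1)) * p j * z * p (j - 1) := by
              rw [hxyz, mul_add, add_mul]
          _ = p j * y - p (j-1) * y := by rw [hypart, hzpart, add_zero]
      rw [Finset.sum_congr rfl hterm, ← Finset.Ico_add_one_right_eq_Icc, Finset.sum_Ico_eq_sum_range,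
        show n+1+1-2 = n from by omega]
      symm
      calc ∑ i ∈ Finset.range n, (p (2+i) * y - p (2+i-1) * y)
          = ∑ i ∈ Finset.range n, (p (i+1+1) * y - p (i+1) * y) := by
            refine Finset.sum_congr rfl fun i _ => ?_
            rw [show 2+i = i+1+1 from by omega, show i+1+1-1 = i+1 from by omega]
        _ = p (n+1) * y - p (0+1) * y := Finset.sum_range_sub (fun k => p (k+1) * y) n
        _ = y := by rw [h1, one_mul]; norm_num [hy1]
    refine ⟨hyY, ?_⟩
    have h' : y + z = (∑ j ∈ Finset.Icc 2 (n + 1), (1 - p (j - 1)) * p j * x * p (j - 1))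
        + (∑ j ∈ Finset.Icc 2 (n + 1), p (j - 1) * x * p j * (1 - p (j - 1))) :=
      hxyz.symm.trans hmain
    rw [hyY] at h'
    exact add_left_cancel h'
end

section
/- With notation as above, x belongs to ker Φ_δ ∩ Δ(δ) if and only if (1-p_{j-1}) x pⱼ = 0 for all j = 1,...,n+1, i.e. ker Φ_δ ∩ Δ(δ) = TN(δ). -/
private lemma sandwich {A : Type*} [Ring A] (s : Finset ℕ) (q : ℕ → A) (x : A)
    (j : ℕ) (hj : j ∈ s)
    (horth : ∀ k ∈ s, k ≠ j → q j * q k = 0 ∧ q k * q j = 0)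
    (hidem : q j * q j = q j)
    (h : ∑ k ∈ s, q k * x * q k = 0) : q j * x * q j = 0 := by
  have h2 := congrArg (fun y => q j * y * q j) h
  simp only [mul_zero, zero_mul] at h2
  rw [Finset.mul_sum, Finset.sum_mul, Finset.sum_eq_single j] at h2
  · rw [show q j * (q j * x * q j) * q j = (q j * q j) * x * (q j * q j) by noncomm_ring,
      hidem] at h2
    exact h2
  · intro k hk hkj
    have ho1 := (horth k hk hkj).1
    have ho2 := (horth k hk hkj).2
    calc q j * (q k * x * q k) * q j = (q j * q k) * x * (q k * q j) := by noncomm_ring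
    _ = 0 := by rw [ho1, ho2, mul_zero]
  · intro h'; exact absurd hj h'

/-- `ker Φ_δ ∩ Δ(δ) = TN(δ)`. -/
theorem stmt10 {A : Type*} [Ring A] (n : ℕ) (p : ℕ → A)
    (h0 : p 0 = 0) (h1 : p (n + 1) = 1)
    (hp : ∀ j ∈ Finset.Icc 0 (n + 1), ∀ k ∈ Finset.Icc 0 (n + 1),
      p j * p k = p (min j k)) (x : A) :
    (Phi n p x = 0 ∧ ∀ j ∈ Finset.Icc 1 n, (1 - p j) * x * p j = 0) ↔
      ∀ j ∈ Finset.Icc 1 (n + 1), (1 - p (j - 1)) * x * p j = 0 := by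
  have hm : ∀ j k, j ≤ n+1 → k ≤ n+1 → p j * p k = p (min j k) := fun j k hj hk =>
    hp j (Finset.mem_Icc.mpr ⟨Nat.zero_le _, hj⟩) k (Finset.mem_Icc.mpr ⟨Nat.zero_le _, hk⟩)
  -- q j kills p k for k below j-1
  have hqp : ∀ j k, 1 ≤ j → j ≤ n+1 → k ≤ j-1 → (p j - p (j-1)) * p k = 0 := by
    intro j k hj1 hj2 hk
    rw [sub_mul, hm j k hj2 (by omega), hm (j-1) k (by omega) (by omega),
      min_eq_right (by omega), min_eq_right (by omega), sub_self]
  have hqone : ∀ j k, 1 ≤ j → j ≤ n+1 → k ≤ j-1 →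
      (p j - p (j-1)) * (1 - p k) = (p j - p (j-1)) := by
    intro j k hj1 hj2 hk
    rw [mul_sub, mul_one, hqp j k hj1 hj2 hk, sub_zero]
  have horth : ∀ j k, 1 ≤ j → j ≤ n+1 → 1 ≤ k → k ≤ n+1 → k ≠ j →
      (p j - p (j-1)) * (p k - p (k-1)) = 0 := by
    intro j k hj1 hj2 hk1 hk2 hne
    rw [sub_mul, mul_sub, mul_sub, hm j k hj2 hk2, hm j (k-1) hj2 (by omega),
      hm (j-1) k (by omega) hk2, hm (j-1) (k-1) (by omega) (by omega)]
    rcases Nat.lt_or_ge j k with h | h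
    · rw [min_eq_left (by omega), min_eq_left (by omega), min_eq_left (by omega),
        min_eq_left (by omega)]
      abel
    · rw [min_eq_right (by omega), min_eq_right (by omega), min_eq_right (by omega),
        min_eq_right (by omega)]
      abel
  have hidem : ∀ j, 1 ≤ j → j ≤ n+1 →
      (p j - p (j-1)) * (p j - p (j-1)) = p j - p (j-1) := by
    intro j hj1 hj2
    rw [sub_mul, mul_sub, mul_sub, hm j j hj2 hj2, hm j (j-1) hj2 (by omega),
      hm (j-1) j (by omega) hj2, hm (j-1) (j-1) (by omega) (by omega),
      min_self, min_self, min_eq_right (by omega), min_eq_left (by omega)]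
    abel
  constructor
  · rintro ⟨hPhi, hD⟩ j hj
    rw [Finset.mem_Icc] at hj
    have hdiag : (p j - p (j-1)) * x * (p j - p (j-1)) = 0 := by
      refine sandwich (Finset.Icc 1 (n+1)) (fun k => p k - p (k-1)) x j
        (Finset.mem_Icc.mpr hj) ?_ (hidem j hj.1 hj.2) hPhi
      intro k hk hkj
      rw [Finset.mem_Icc] at hk
      exact ⟨horth j k hj.1 hj.2 hk.1 hk.2 hkj,
        horth k j hk.1 hk.2 hj.1 hj.2 (Ne.symm hkj)⟩
    -- decompose 1 - p (j-1) = (1 - p j) + (p j - p (j-1))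
    have e1 : (1 : A) - p (j-1) = (1 - p j) + (p j - p (j-1)) := by abel
    rw [e1, add_mul, add_mul]
    -- first term
    have t1 : (1 - p j) * x * p j = 0 := by
      rcases Nat.lt_or_ge j (n+1) with h | h
      · exact hD j (Finset.mem_Icc.mpr ⟨hj.1, by omega⟩)
      · have : j = n+1 := by omega
        rw [this, h1, sub_self, zero_mul, zero_mul]
    -- second term
    have t2 : (p j - p (j-1)) * x * p j = 0 := by
      have e2 : p j = p (j-1) + (p j - p (j-1)) := by abel
      have t2a : (p j - p (j-1)) * x * p (j-1) = 0 := by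
        rcases Nat.eq_or_lt_of_le hj.1 with h | h
        · rw [show j - 1 = 0 by omega, h0, mul_zero]
        · have hD' : (1 - p (j-1)) * x * p (j-1) = 0 :=
            hD (j-1) (Finset.mem_Icc.mpr ⟨by omega, by omega⟩)
          calc (p j - p (j-1)) * x * p (j-1)
              = (p j - p (j-1)) * (1 - p (j-1)) * x * p (j-1) := by
                rw [hqone j (j-1) hj.1 hj.2 le_rfl]
            _ = (p j - p (j-1)) * ((1 - p (j-1)) * x * p (j-1)) := by noncomm_ring
            _ = 0 := by rw [hD', mul_zero]
      have e3 : (p j - p (j-1)) * x * p j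
          = (p j - p (j-1)) * x * p (j-1) + (p j - p (j-1)) * x * (p j - p (j-1)) := by
        noncomm_ring
      rw [e3, t2a, hdiag, add_zero]
    rw [t1, t2, add_zero]
  · intro hT
    have hT' : ∀ j, 1 ≤ j → j ≤ n+1 → (1 - p (j-1)) * x * p j = 0 := fun j hj1 hj2 =>
      hT j (Finset.mem_Icc.mpr ⟨hj1, hj2⟩)
    have hqxp : ∀ j, 1 ≤ j → j ≤ n+1 → (p j - p (j-1)) * x * p j = 0 := by
      intro j hj1 hj2
      calc (p j - p (j-1)) * x * p j
          = (p j - p (j-1)) * (1 - p (j-1)) * x * p j := by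
            rw [hqone j (j-1) hj1 hj2 le_rfl]
        _ = (p j - p (j-1)) * ((1 - p (j-1)) * x * p j) := by noncomm_ring
        _ = 0 := by rw [hT' j hj1 hj2, mul_zero]
    have hqxp' : ∀ j, 1 ≤ j → j ≤ n+1 → (p j - p (j-1)) * x * p (j-1) = 0 := by
      intro j hj1 hj2
      rcases Nat.eq_or_lt_of_le hj1 with h | h
      · rw [show j - 1 = 0 by omega, h0, mul_zero]
      · calc (p j - p (j-1)) * x * p (j-1)
            = (p j - p (j-1)) * (1 - p (j-1-1)) * x * p (j-1) := by
              rw [hqone j (j-1-1) hj1 hj2 (by omega)]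
          _ = (p j - p (j-1)) * ((1 - p (j-1-1)) * x * p (j-1)) := by noncomm_ring
          _ = 0 := by rw [hT' (j-1) (by omega) (by omega), mul_zero]
    constructor
    · unfold Phi
      refine Finset.sum_eq_zero fun j hj => ?_
      rw [Finset.mem_Icc] at hj
      rw [mul_sub, hqxp j hj.1 hj.2, hqxp' j hj.1 hj.2, sub_zero]
    · intro j hj
      rw [Finset.mem_Icc] at hj
      have e : (1 : A) - p j = (1 - p j) * (1 - p (j-1)) := by
        rw [sub_mul, mul_sub, mul_sub, one_mul, mul_one, one_mul,
          hm j (j-1) (by omega) (by omega), min_eq_right (by omega)]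
        abel
      calc (1 - p j) * x * p j = (1 - p j) * ((1 - p (j-1)) * x * p j) := by
            rw [← mul_assoc, ← mul_assoc, ← e]
        _ = 0 := by rw [hT' j hj.1 (by omega), mul_zero]
end

section
/- With notation as above, the map E_δ(a) = Σ_{j=1}^{n+1} (1-p_{j-1}) pⱼ a (1-p_{j-1}) is a linear idempotent map from A onto Δ(δ) with kernel TN(δ̂) = {a : pⱼ a (1-p_{j-1}) = 0 ∀j}, and E_δ(1) = 1. -/
/-- The projection `E_δ` onto `Δ(δ)` along `TN(δ̂)`. -/
def Edel {A : Type*} [Ring A] (n : ℕ) (p : ℕ → A) (a : A) : A :=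
  ∑ j ∈ Finset.Icc 1 (n + 1), (1 - p (j - 1)) * p j * a * (1 - p (j - 1))

/-- `E_δ` is a linear idempotent map from `A` onto `Δ(δ)` with kernel `TN(δ̂)`,
and `E_δ(1) = 1`. -/
theorem stmt11 {A : Type*} [Ring A] (n : ℕ) (p : ℕ → A)
    (h0 : p 0 = 0) (h1 : p (n + 1) = 1)
    (hp : ∀ j ∈ Finset.Icc 0 (n + 1), ∀ k ∈ Finset.Icc 0 (n + 1),
      p j * p k = p (min j k)) :
    (∀ a b : A, Edel n p (a + b) = Edel n p a + Edel n p b) ∧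
    (∀ a : A, Edel n p (Edel n p a) = Edel n p a) ∧
    Set.range (Edel n p) = {a : A | ∀ j ∈ Finset.Icc 1 n, (1 - p j) * a * p j = 0} ∧
    {a : A | Edel n p a = 0}
      = {a : A | ∀ j ∈ Finset.Icc 1 (n + 1), p j * a * (1 - p (j - 1)) = 0} ∧
    Edel n p (1 : A) = 1 := by
  have plo : ∀ i k, i ≤ k → k ≤ n + 1 → p i * p k = p i := by
    intro i k h hk
    have := hp i (by simp [Finset.mem_Icc]; omega) k (by simp [Finset.mem_Icc]; omega)
    rwa [min_eq_left h] at this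
  have phi : ∀ i k, i ≤ k → k ≤ n + 1 → p k * p i = p i := by
    intro i k h hk
    have := hp k (by simp [Finset.mem_Icc]; omega) i (by simp [Finset.mem_Icc]; omega)
    rwa [min_eq_right h] at this
  set q : ℕ → A := fun i => p (i + 1) - p i with hq
  have key : ∀ a : A, Edel n p a = ∑ i ∈ Finset.range (n + 1), q i * a * (1 - p i) := by
    intro a
    rw [Edel, ← Finset.Ico_add_one_right_eq_Icc, Finset.sum_Ico_eq_sum_range]
    refine Finset.sum_congr rfl fun i hi => ?_
    simp only [Finset.mem_range] at hi
    rw [show 1 + i = i + 1 from by omega, show i + 1 - 1 = i from rfl]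
    have h2 : (1 - p i) * p (i + 1) = q i := by
      rw [sub_mul, one_mul, plo i (i + 1) (by omega) (by omega), hq]
    rw [h2]
  have tel : ∀ m, ∑ i ∈ Finset.range m, q i = p m := by
    intro m
    have := Finset.sum_range_sub p m
    rw [h0, sub_zero] at this
    simpa [hq] using this
  have qp : ∀ i, i ≤ n → q i * p i = 0 := by
    intro i hi
    show (p (i + 1) - p i) * p i = 0
    rw [sub_mul, phi i (i + 1) (by omega) (by omega), plo i i le_rfl (by omega), sub_self]
  have pq_hi : ∀ i k, i ≤ k → k ≤ n → p (k + 1) * q i = q i := by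
    intro i k h hk
    show p (k + 1) * (p (i + 1) - p i) = p (i + 1) - p i
    rw [mul_sub, phi (i + 1) (k + 1) (by omega) (by omega), phi i (k + 1) (by omega) (by omega)]
  have pq_zero : ∀ i k, k < i → i ≤ n → p (k + 1) * q i = 0 := by
    intro i k h hi
    show p (k + 1) * (p (i + 1) - p i) = 0
    rw [mul_sub, plo (k + 1) (i + 1) (by omega) (by omega), plo (k + 1) i (by omega) (by omega),
      sub_self]
  have fq_zero : ∀ i j, i < j → j ≤ n + 1 → (1 - p j) * q i = 0 := by
    intro i j h hj
    show (1 - p j) * (p (i + 1) - p i) = 0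
    rw [sub_mul, one_mul, mul_sub, phi (i + 1) j (by omega) hj, phi i j (by omega) hj, sub_self]
  have fp_zero : ∀ i j, j ≤ i → i ≤ n + 1 → (1 - p i) * p j = 0 := by
    intro i j h hi
    rw [sub_mul, one_mul, phi j i h hi, sub_self]
  have ff : ∀ i k, i ≤ k → k ≤ n + 1 → (1 - p i) * (1 - p k) = 1 - p k := by
    intro i k h hk
    have e : (1 - p i) * (1 - p k) = 1 - p k - (p i - p i * p k) := by noncomm_ring
    rw [e, plo i k h hk, sub_self, sub_zero]
  have qq_self : ∀ i, i ≤ n → q i * q i = q i := by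
    intro i hi
    show (p (i + 1) - p i) * (p (i + 1) - p i) = p (i + 1) - p i
    rw [sub_mul, mul_sub, mul_sub, plo (i + 1) (i + 1) le_rfl (by omega),
      phi i (i + 1) (by omega) (by omega), plo i (i + 1) (by omega) (by omega),
      plo i i le_rfl (by omega)]
    abel
  have qq_ne : ∀ i k, i ≤ n → k ≤ n → i ≠ k → q i * q k = 0 := by
    intro i k hi hk hne
    show (p (i + 1) - p i) * (p (k + 1) - p k) = 0
    rcases lt_or_gt_of_ne hne with h | h
    · rw [sub_mul, mul_sub, mul_sub, plo (i + 1) (k + 1) (by omega) (by omega),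
        plo (i + 1) k (by omega) (by omega), plo i (k + 1) (by omega) (by omega),
        plo i k (by omega) (by omega)]
      abel
    · rw [sub_mul, mul_sub, mul_sub, phi (k + 1) (i + 1) (by omega) (by omega),
        phi k (i + 1) (by omega) (by omega), phi (k + 1) i (by omega) (by omega),
        phi k i (by omega) (by omega)]
      abel
  have EdelΔ : ∀ a : A, (∀ i, i ≤ n → (1 - p i) * a * p i = 0) → Edel n p a = a := by
    intro a hΔ'
    rw [key]
    have hterm : ∀ i ∈ Finset.range (n + 1), q i * a * (1 - p i) = q i * a := by
      intro i hi
      simp only [Finset.mem_range] at hi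
      have hap : a * p i = p i * a * p i := by
        have e : (1 - p i) * a * p i = a * p i - p i * a * p i := by noncomm_ring
        have := hΔ' i (by omega)
        rw [e, sub_eq_zero] at this
        exact this
      have e2 : q i * a * (1 - p i) = q i * a - q i * (a * p i) := by noncomm_ring
      rw [e2, hap]
      have e3 : q i * (p i * a * p i) = q i * p i * (a * p i) := by noncomm_ring
      rw [e3, qp i (by omega), zero_mul, sub_zero]
    rw [Finset.sum_congr rfl hterm, ← Finset.sum_mul, tel, h1, one_mul]
  refine ⟨?_, ?_, ?_, ?_, ?_⟩
  · intro a b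
    rw [key, key, key, ← Finset.sum_add_distrib]
    exact Finset.sum_congr rfl fun i _ => by rw [mul_add, add_mul]
  · intro a
    rw [key (Edel n p a), key a]
    refine Finset.sum_congr rfl fun i hi => ?_
    simp only [Finset.mem_range] at hi
    rw [Finset.mul_sum, Finset.sum_mul, Finset.sum_eq_single i]
    · have e1 : q i * (q i * a * (1 - p i)) * (1 - p i)
          = q i * q i * a * ((1 - p i) * (1 - p i)) := by noncomm_ring
      rw [e1, qq_self i (by omega), ff i i le_rfl (by omega)]
    · intro k hk hne
      simp only [Finset.mem_range] at hk
      have e1 : q i * (q k * a * (1 - p k)) * (1 - p i)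
          = q i * q k * (a * ((1 - p k) * (1 - p i))) := by noncomm_ring
      rw [e1, qq_ne i k (by omega) (by omega) (Ne.symm hne), zero_mul]
    · intro h
      exact absurd (Finset.mem_range.mpr (by omega)) h
  · ext a
    simp only [Set.mem_range, Set.mem_setOf_eq]
    constructor
    · rintro ⟨b, rfl⟩ j hj
      simp only [Finset.mem_Icc] at hj
      rw [key, Finset.mul_sum, Finset.sum_mul]
      refine Finset.sum_eq_zero fun i hi => ?_
      simp only [Finset.mem_range] at hi
      have e1 : (1 - p j) * (q i * b * (1 - p i)) * p j
          = (1 - p j) * q i * (b * ((1 - p i) * p j)) := by noncomm_ring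
      rcases lt_or_ge i j with h | h
      · rw [e1, fq_zero i j h (by omega), zero_mul]
      · rw [e1, fp_zero i j h (by omega), mul_zero, mul_zero]
    · intro hΔ
      refine ⟨a, EdelΔ a fun i hi => ?_⟩
      rcases Nat.eq_zero_or_pos i with h | h
      · subst h; rw [h0]; simp
      · exact hΔ i (Finset.mem_Icc.mpr ⟨h, hi⟩)
  · ext a
    simp only [Set.mem_setOf_eq]
    constructor
    · intro hEa j hj
      simp only [Finset.mem_Icc] at hj
      obtain ⟨k, rfl⟩ : ∃ k, j = k + 1 := ⟨j - 1, by omega⟩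
      simp only [Nat.add_sub_cancel]
      have hk : k ≤ n := by omega
      have eval : p (k + 1) * Edel n p a * (1 - p k) = p (k + 1) * a * (1 - p k) := by
        rw [key, Finset.mul_sum, Finset.sum_mul]
        rw [← Finset.sum_subset (Finset.range_subset_range.mpr (by omega) :
            Finset.range (k + 1) ⊆ Finset.range (n + 1))]
        · have hterm : ∀ i ∈ Finset.range (k + 1),
              p (k + 1) * (q i * a * (1 - p i)) * (1 - p k) = q i * (a * (1 - p k)) := by
            intro i hi
            simp only [Finset.mem_range] at hi
            have e1 : p (k + 1) * (q i * a * (1 - p i)) * (1 - p k)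
                = p (k + 1) * q i * (a * ((1 - p i) * (1 - p k))) := by noncomm_ring
            rw [e1, pq_hi i k (by omega) hk, ff i k (by omega) (by omega)]
          rw [Finset.sum_congr rfl hterm, ← Finset.sum_mul, tel, mul_assoc]
        · intro i hi hni
          simp only [Finset.mem_range] at hi hni
          have e1 : p (k + 1) * (q i * a * (1 - p i)) * (1 - p k)
              = p (k + 1) * q i * (a * ((1 - p i) * (1 - p k))) := by noncomm_ring
          rw [e1, pq_zero i k (by omega) (by omega), zero_mul]
      rw [hEa, mul_zero, zero_mul] at eval
      exact eval.symm
    · intro h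
      rw [Edel]
      refine Finset.sum_eq_zero fun j hj => ?_
      have e1 : (1 - p (j - 1)) * p j * a * (1 - p (j - 1))
          = (1 - p (j - 1)) * (p j * a * (1 - p (j - 1))) := by noncomm_ring
      rw [e1, h j hj, mul_zero]
  · rw [key]
    have hterm : ∀ i ∈ Finset.range (n + 1), q i * (1 : A) * (1 - p i) = q i := by
      intro i hi
      simp only [Finset.mem_range] at hi
      rw [mul_one, mul_sub, mul_one, qp i (by omega), sub_zero]
    rw [Finset.sum_congr rfl hterm, tel, h1]
end
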